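/- The tuple of values (val(v))_{v∈V} of a stochastic reachability game is the least fixed point of the Bellman operator V on the complete lattice of functions V → [0,1] ordered pointwise, where V(f)(v) = 1 if v ∈ T, sup{f(u) : v → u} if v ∈ V_Box \ T, inf{f(u) : v → u} if v ∈ V_Diamond \ T, and Σ_{v →^x u} x·f(u) if v ∈ V_Circle \ T. -/

import Mathlib

open scoped Classical

/-- A stochastic game: a directed graph with a total edge relation, vertices
partitioned among player Box, player Diamond and probabilistic vertices,
the latter carrying a positive probability distribution on outgoing edges. -/
structure SGame (V : Type*) where
  edge : V → V → Prop
  total : ∀ v, ∃ u, edge v u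
  isBox : V → Prop
  isDiamond : V → Prop
  isCirc : V → Prop
  cover : ∀ v, isBox v ∨ isDiamond v ∨ isCirc v
  disjBD : ∀ v, ¬ (isBox v ∧ isDiamond v)
  disjBC : ∀ v, ¬ (isBox v ∧ isCirc v)
  disjDC : ∀ v, ¬ (isDiamond v ∧ isCirc v)
  prob : V → V → ℝ
  prob_nonneg : ∀ v u, 0 ≤ prob v u
  prob_supp : ∀ v u, isCirc v → (0 < prob v u ↔ edge v u)
  prob_sum : ∀ v, isCirc v → ∑' u, prob v u = 1

/-- A history-dependent randomized strategy for the player owning the vertices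
satisfying `own`: it assigns to every history `w` and current vertex `v` owned
by the player a probability distribution on the outgoing edges of `v`. -/
structure SGame.Strat {V : Type*} (G : SGame V) (own : V → Prop) where
  f : List V → V → V → ℝ
  nonneg : ∀ w v u, 0 ≤ f w v u
  supp : ∀ w v u, own v → f w v u ≠ 0 → G.edge v u
  sum_one : ∀ w v, own v → ∑' u, f w v u = 1

/-- One-step transition probability of the play `G(σ,π)` given history `w`. -/
noncomputable def SGame.step {V : Type*} (G : SGame V) (σ : G.Strat G.isBox)
    (π : G.Strat G.isDiamond) (w : List V) (v u : V) : ℝ :=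
  if G.isBox v then σ.f w v u else if G.isDiamond v then π.f w v u else G.prob v u

/-- Probability of reaching the target set `T` from `v` within at most `n`
transitions in the play `G(σ,π)`, given that history `w` has elapsed. -/
noncomputable def SGame.reachN {V : Type*} (G : SGame V) (σ : G.Strat G.isBox)
    (π : G.Strat G.isDiamond) (T : Set V) : ℕ → List V → V → ℝ
  | 0, _, v => if v ∈ T then 1 else 0
  | n+1, w, v => if v ∈ T then 1 else
      ∑' u, G.step σ π w v u * SGame.reachN G σ π T n (w ++ [v]) u

/-- Probability `P_v^{σ,π}(Reach(T))` of reaching `T` from `v` in the play `G(σ,π)`. -/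
noncomputable def SGame.reachP {V : Type*} (G : SGame V) (σ : G.Strat G.isBox)
    (π : G.Strat G.isDiamond) (T : Set V) (v : V) : ℝ :=
  ⨆ n, G.reachN σ π T n [] v

/-- The (lower) value `sup_σ inf_π P_v^{σ,π}(Reach(T))` of vertex `v`. -/
noncomputable def SGame.val {V : Type*} (G : SGame V) (T : Set V) (v : V) : ℝ :=
  ⨆ σ : G.Strat G.isBox, ⨅ π : G.Strat G.isDiamond, G.reachP σ π T v

/-- The Bellman operator on functions `V → [0,1]`. -/
noncomputable def SGame.bellman {V : Type*} (G : SGame V) (T : Set V)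
    (f : V → ℝ) : V → ℝ := fun v =>
  if v ∈ T then 1
  else if G.isBox v then sSup (f '' {u | G.edge v u})
  else if G.isDiamond v then sInf (f '' {u | G.edge v u})
  else ∑' u, G.prob v u * f u


----------------------------------------------------------------
-- Auxiliary development
----------------------------------------------------------------

namespace SGame

variable {V : Type*} (G : SGame V)

/-- a default successor of each vertex -/
noncomputable def dflt (v : V) : V := (G.total v).choose

lemma edge_dflt (v : V) : G.edge v (G.dflt v) := (G.total v).choose_spec

lemma summable_of_tsum_one {g : V → ℝ} (h : ∑' u, g u = 1) : Summable g := by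
  by_contra hs
  rw [tsum_eq_zero_of_not_summable hs] at h
  norm_num at h

lemma Summable.mul_bdd {a g : V → ℝ} {C : ℝ} (ha : Summable a) (h0 : ∀ u, 0 ≤ a u)
    (hg0 : ∀ u, 0 ≤ g u) (hgC : ∀ u, g u ≤ C) : Summable fun u => a u * g u := by
  refine Summable.of_nonneg_of_le (fun u => mul_nonneg (h0 u) (hg0 u))
    (fun u => mul_le_mul_of_nonneg_left (hgC u) (h0 u)) (ha.mul_right C)

lemma tsum_mul_le_tsum_mul {a X Y : V → ℝ} (ha : ∀ u, 0 ≤ a u)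
    (hX : Summable fun u => a u * X u) (hY : Summable fun u => a u * Y u)
    (h : ∀ u, a u ≠ 0 → X u ≤ Y u) : ∑' u, a u * X u ≤ ∑' u, a u * Y u := by
  refine Summable.tsum_le_tsum (fun u => ?_) hX hY
  by_cases h0 : a u = 0
  · simp [h0]
  · exact mul_le_mul_of_nonneg_left (h u h0) (ha u)

/-- the deterministic strategy following default successors -/
noncomputable def detStrat (own : V → Prop) : G.Strat own where
  f := fun _ v u => if u = G.dflt v then 1 else 0
  nonneg := fun _ v u => by by_cases h : u = G.dflt v <;> simp [h]
  supp := fun _ v u _ h => by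
    by_cases hu : u = G.dflt v
    · subst hu; exact G.edge_dflt v
    · simp [hu] at h
  sum_one := fun _ v _ => tsum_ite_eq (G.dflt v) 1

instance instNonemptyStrat (own : V → Prop) : Nonempty (G.Strat own) := ⟨G.detStrat own⟩

variable {T : Set V} (σ : G.Strat G.isBox) (π : G.Strat G.isDiamond)

lemma step_nonneg (w : List V) (v u : V) : 0 ≤ G.step σ π w v u := by
  unfold step
  split_ifs
  · exact σ.nonneg w v u
  · exact π.nonneg w v u
  · exact G.prob_nonneg v u

lemma step_edge {w : List V} {v u : V} (h : G.step σ π w v u ≠ 0) : G.edge v u := by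
  unfold step at h
  split_ifs at h with h1 h2
  · exact σ.supp w v u h1 h
  · exact π.supp w v u h2 h
  · exact (G.prob_supp v u (by rcases G.cover v with h'|h'|h' <;> tauto)).1
      (lt_of_le_of_ne (G.prob_nonneg v u) (Ne.symm h))

lemma tsum_step (w : List V) (v : V) : ∑' u, G.step σ π w v u = 1 := by
  unfold step
  split_ifs with h1 h2
  · exact σ.sum_one w v h1
  · exact π.sum_one w v h2
  · exact G.prob_sum v (by rcases G.cover v with h'|h'|h' <;> tauto)

lemma summable_step (w : List V) (v : V) : Summable (G.step σ π w v) :=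
  summable_of_tsum_one (G.tsum_step σ π w v)


lemma reachN_zero (w : List V) (v : V) :
    G.reachN σ π T 0 w v = if v ∈ T then 1 else 0 := rfl

lemma reachN_succ (n : ℕ) (w : List V) (v : V) :
    G.reachN σ π T (n+1) w v = if v ∈ T then 1 else
      ∑' u, G.step σ π w v u * G.reachN σ π T n (w ++ [v]) u := rfl

lemma reachN_nonneg (n : ℕ) (w : List V) (v : V) : 0 ≤ G.reachN σ π T n w v := by
  induction n generalizing w v with
  | zero => rw [reachN_zero]; split_ifs <;> norm_num
  | succ n ih =>
    rw [reachN_succ]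
    split_ifs
    · norm_num
    · exact tsum_nonneg fun u => mul_nonneg (G.step_nonneg σ π w v u) (ih _ u)

lemma reachN_le_one (n : ℕ) (w : List V) (v : V) : G.reachN σ π T n w v ≤ 1 := by
  induction n generalizing w v with
  | zero => rw [reachN_zero]; split_ifs <;> norm_num
  | succ n ih =>
    rw [reachN_succ]
    split_ifs
    · norm_num
    · calc ∑' u, G.step σ π w v u * G.reachN σ π T n (w ++ [v]) u
          ≤ ∑' u, G.step σ π w v u * 1 := by
            refine tsum_mul_le_tsum_mul (G.step_nonneg σ π w v)
              (Summable.mul_bdd (G.summable_step σ π w v) (G.step_nonneg σ π w v)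
                (fun u => G.reachN_nonneg σ π n _ u) (fun u => ih _ u))
              ((G.summable_step σ π w v).mul_right 1) (fun u _ => ih _ u)
        _ = 1 := by simp [G.tsum_step σ π w v]

lemma summable_step_mul_reachN (n : ℕ) (w w' : List V) (v : V) :
    Summable fun u => G.step σ π w v u * G.reachN σ π T n w' u :=
  Summable.mul_bdd (G.summable_step σ π w v) (G.step_nonneg σ π w v)
    (fun u => G.reachN_nonneg σ π n w' u) (fun u => G.reachN_le_one σ π n w' u)

lemma reachN_le_succ (n : ℕ) (w : List V) (v : V) :
    G.reachN σ π T n w v ≤ G.reachN σ π T (n+1) w v := by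
  induction n generalizing w v with
  | zero =>
    rw [reachN_zero, reachN_succ]
    split_ifs
    · exact le_refl _
    · exact tsum_nonneg fun u => mul_nonneg (G.step_nonneg σ π w v u)
        (G.reachN_nonneg σ π 0 _ u)
  | succ n ih =>
    rw [reachN_succ, reachN_succ]
    split_ifs
    · exact le_refl _
    · exact tsum_mul_le_tsum_mul (G.step_nonneg σ π w v)
        (G.summable_step_mul_reachN σ π n w _ v)
        (G.summable_step_mul_reachN σ π (n+1) w _ v)
        (fun u _ => ih _ u)

lemma reachN_mono (w : List V) (v : V) : Monotone fun n => G.reachN σ π T n w v :=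
  monotone_nat_of_le_succ fun n => G.reachN_le_succ σ π n w v

lemma reachN_congr {σ' : G.Strat G.isBox} {π' : G.Strat G.isDiamond} (n : ℕ) :
    ∀ (w : List V) (v : V),
      (∀ w' v' u, ((w' = w ∧ v' = v) ∨ (w ++ [v]) <+: w') →
        G.step σ π w' v' u = G.step σ' π' w' v' u) →
      G.reachN σ π T n w v = G.reachN σ' π' T n w v := by
  induction n with
  | zero => intro w v _; rfl
  | succ n ih =>
    intro w v h
    rw [reachN_succ, reachN_succ]
    split_ifs with hT
    · rfl
    · refine tsum_congr fun u => ?_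
      rw [h w v u (Or.inl ⟨rfl, rfl⟩), ih (w ++ [v]) u ?_]
      intro w' v' u' h'
      refine h w' v' u' (Or.inr ?_)
      rcases h' with ⟨rfl, rfl⟩ | hpre
      · exact List.prefix_refl _
      · exact ((w ++ [v]).prefix_append [u]).trans hpre


/-- shift a strategy by a history prefix -/
def Strat.shift {V : Type*} {G : SGame V} {own : V → Prop} (s : G.Strat own) (w0 : List V) :
    G.Strat own where
  f := fun w => s.f (w0 ++ w)
  nonneg := fun w v u => s.nonneg (w0 ++ w) v u
  supp := fun w v u h h' => s.supp (w0 ++ w) v u h h'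
  sum_one := fun w v h => s.sum_one (w0 ++ w) v h

lemma reachN_shift (w0 : List V) (n : ℕ) : ∀ (w : List V) (v : V),
    G.reachN (σ.shift w0) (π.shift w0) T n w v = G.reachN σ π T n (w0 ++ w) v := by
  induction n with
  | zero => intro w v; rfl
  | succ n ih =>
    intro w v
    rw [reachN_succ, reachN_succ]
    split_ifs with hT
    · rfl
    · refine tsum_congr fun u => ?_
      have hstep : G.step (σ.shift w0) (π.shift w0) w v u = G.step σ π (w0 ++ w) v u := rfl
      rw [hstep, ih (w ++ [v]) u, List.append_assoc]

lemma reachN_ext {σ' : G.Strat G.isBox} {π' : G.Strat G.isDiamond}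
    (hσ : σ.f = σ'.f) (hπ : π.f = π'.f) (n : ℕ) (w : List V) (v : V) :
    G.reachN σ π T n w v = G.reachN σ' π' T n w v := by
  refine G.reachN_congr σ π n w v fun w' v' u _ => ?_
  unfold step
  rw [hσ, hπ]

-- reachP basics

lemma bddAbove_reachN (v : V) : BddAbove (Set.range fun n => G.reachN σ π T n [] v) :=
  ⟨1, by rintro x ⟨n, rfl⟩; exact G.reachN_le_one σ π n [] v⟩

lemma reachN_le_reachP (n : ℕ) (v : V) : G.reachN σ π T n [] v ≤ G.reachP σ π T v :=
  le_ciSup (G.bddAbove_reachN σ π v) n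

lemma reachP_nonneg (v : V) : 0 ≤ G.reachP σ π T v :=
  le_trans (G.reachN_nonneg σ π 0 [] v) (G.reachN_le_reachP σ π 0 v)

lemma reachP_le_one (v : V) : G.reachP σ π T v ≤ 1 :=
  ciSup_le fun n => G.reachN_le_one σ π n [] v

lemma reachP_mem (v : V) (hv : v ∈ T) : G.reachP σ π T v = 1 := by
  have : ∀ n, G.reachN σ π T n [] v = 1 := by
    intro n; cases n <;> simp [reachN_zero, reachN_succ, hv]
  simp only [reachP, this, ciSup_const]

lemma reachP_ext {σ' : G.Strat G.isBox} {π' : G.Strat G.isDiamond}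
    (hσ : σ.f = σ'.f) (hπ : π.f = π'.f) (v : V) :
    G.reachP σ π T v = G.reachP σ' π' T v :=
  iSup_congr fun n => G.reachN_ext σ π hσ hπ n [] v

lemma tendsto_reachN (v : V) :
    Filter.Tendsto (fun n => G.reachN σ π T n [] v) Filter.atTop (nhds (G.reachP σ π T v)) :=
  tendsto_atTop_ciSup (G.reachN_mono σ π [] v) (G.bddAbove_reachN σ π v)

/-- the one-step decomposition of reachP -/
lemma reachP_step {v : V} (hv : v ∉ T) :
    G.reachP σ π T v =
      ∑' u, G.step σ π [] v u * G.reachP (σ.shift [v]) (π.shift [v]) T u := by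
  have h1 : Filter.Tendsto (fun n => G.reachN σ π T (n+1) [] v) Filter.atTop
      (nhds (G.reachP σ π T v)) :=
    (G.tendsto_reachN σ π v).comp (Filter.tendsto_add_atTop_nat 1)
  have h2 : ∀ n, G.reachN σ π T (n+1) [] v =
      ∑' u, G.step σ π [] v u * G.reachN (σ.shift [v]) (π.shift [v]) T n [] u := by
    intro n
    rw [reachN_succ, if_neg hv]
    refine tsum_congr fun u => ?_
    rw [G.reachN_shift σ π [v] n [] u]
    rfl
  have h3 : Filter.Tendsto
      (fun n => ∑' u, G.step σ π [] v u * G.reachN (σ.shift [v]) (π.shift [v]) T n [] u)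
      Filter.atTop
      (nhds (∑' u, G.step σ π [] v u * G.reachP (σ.shift [v]) (π.shift [v]) T u)) := by
    refine tendsto_tsum_of_dominated_convergence (G.summable_step σ π [] v)
      (fun u => (tendsto_const_nhds.mul (G.tendsto_reachN _ _ u))) ?_
    refine Filter.Eventually.of_forall fun n u => ?_
    rw [Real.norm_eq_abs, abs_mul, abs_of_nonneg (G.step_nonneg σ π [] v u),
      abs_of_nonneg (G.reachN_nonneg _ _ n [] u)]
    exact mul_le_of_le_one_right (G.step_nonneg σ π [] v u) (G.reachN_le_one _ _ n [] u)
  have h1' : Filter.Tendsto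
      (fun n => ∑' u, G.step σ π [] v u * G.reachN (σ.shift [v]) (π.shift [v]) T n [] u)
      Filter.atTop (nhds (G.reachP σ π T v)) := by
    simpa only [h2] using h1
  exact tendsto_nhds_unique h1' h3


/-- combine a family of strategies, playing `s u` when the play started at `u` -/
noncomputable def comb {V : Type*} {G : SGame V} {own : V → Prop}
    (s : V → G.Strat own) : G.Strat own where
  f := fun w v u => match w with
    | [] => (s v).f [] v u
    | x :: w' => (s x).f (x :: w') v u
  nonneg := fun w v u => by
    cases w with
    | nil => exact (s v).nonneg [] v u
    | cons x w' => exact (s x).nonneg (x :: w') v u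
  supp := fun w v u h h' => by
    cases w with
    | nil => exact (s v).supp [] v u h h'
    | cons x w' => exact (s x).supp (x :: w') v u h h'
  sum_one := fun w v h => by
    cases w with
    | nil => exact (s v).sum_one [] v h
    | cons x w' => exact (s x).sum_one (x :: w') v h

/-- prepend a dummy first step to a strategy -/
noncomputable def consS {V : Type*} {G : SGame V} {own : V → Prop}
    (s : G.Strat own) : G.Strat own where
  f := fun w v u => match w with
    | [] => (G.detStrat own).f [] v u
    | _ :: w' => s.f w' v u
  nonneg := fun w v u => by
    cases w with
    | nil => exact (G.detStrat own).nonneg [] v u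
    | cons x w' => exact s.nonneg w' v u
  supp := fun w v u h h' => by
    cases w with
    | nil => exact (G.detStrat own).supp [] v u h h'
    | cons x w' => exact s.supp w' v u h h'
  sum_one := fun w v h => by
    cases w with
    | nil => exact (G.detStrat own).sum_one [] v h
    | cons x w' => exact s.sum_one w' v h

/-- play deterministically from `v0` to `u0`, then follow `s` -/
noncomputable def afterS {V : Type*} {G : SGame V} {own : V → Prop}
    (v0 u0 : V) (h0 : G.edge v0 u0) (s : G.Strat own) : G.Strat own where
  f := fun w v u => match w with
    | [] => if v = v0 then (if u = u0 then 1 else 0) else (G.detStrat own).f [] v u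
    | _ :: w' => s.f w' v u
  nonneg := fun w v u => by
    cases w with
    | nil =>
      show (0:ℝ) ≤ if v = v0 then (if u = u0 then 1 else 0) else (G.detStrat own).f [] v u
      split_ifs with h1 h2
      · norm_num
      · norm_num
      · exact (G.detStrat own).nonneg [] v u
    | cons x w' => exact s.nonneg w' v u
  supp := fun w v u h h' => by
    cases w with
    | nil =>
      revert h'
      show (if v = v0 then (if u = u0 then (1:ℝ) else 0) else (G.detStrat own).f [] v u) ≠ 0 → _
      intro h'
      split_ifs at h' with h1 h2
      · subst h1; subst h2; exact h0
      · exact absurd rfl h'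
      · exact (G.detStrat own).supp [] v u h h'
    | cons x w' => exact s.supp w' v u h h'
  sum_one := fun w v h => by
    cases w with
    | nil =>
      show (∑' u, if v = v0 then _ else _) = 1
      split_ifs with hv
      · exact tsum_ite_eq u0 1
      · exact (G.detStrat own).sum_one [] v h
    | cons x w' => exact s.sum_one w' v h

lemma shift_consS {own : V → Prop} (s : G.Strat own) (x : V) :
    ((consS s).shift [x] : G.Strat own).f = s.f := rfl

lemma shift_afterS {own : V → Prop} (v0 u0 x : V) (h0 : G.edge v0 u0) (s : G.Strat own) :
    ((afterS v0 u0 h0 s).shift [x] : G.Strat own).f = s.f := rfl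

lemma reachP_comb_box (s : V → G.Strat G.isBox) (π : G.Strat G.isDiamond) (u : V) :
    G.reachP (comb s) π T u = G.reachP (s u) π T u := by
  refine iSup_congr fun n => G.reachN_congr _ _ n [] u fun w' v' u' h => ?_
  have hf : (comb s).f w' v' u' = (s u).f w' v' u' := by
    rcases h with ⟨rfl, rfl⟩ | ⟨t, rfl⟩
    · rfl
    · rfl
  unfold step
  rw [hf]

lemma reachP_comb_dia (σ : G.Strat G.isBox) (s : V → G.Strat G.isDiamond) (u : V) :
    G.reachP σ (comb s) T u = G.reachP σ (s u) T u := by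
  refine iSup_congr fun n => G.reachN_congr _ _ n [] u fun w' v' u' h => ?_
  have hf : (comb s).f w' v' u' = (s u).f w' v' u' := by
    rcases h with ⟨rfl, rfl⟩ | ⟨t, rfl⟩
    · rfl
    · rfl
  unfold step
  rw [hf]


lemma le_of_forall_pos' {a b : ℝ} (h : ∀ ε : ℝ, 0 < ε → a ≤ b + ε) : a ≤ b := by
  by_contra hlt
  push_neg at hlt
  have := h ((a - b)/2) (by linarith)
  linarith

-- val basics

lemma bddBelow_reachP (v : V) :
    BddBelow (Set.range fun π : G.Strat G.isDiamond => G.reachP σ π T v) :=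
  ⟨0, by rintro x ⟨π', rfl⟩; exact G.reachP_nonneg σ π' v⟩

lemma iInf_reachP_nonneg (v : V) : 0 ≤ ⨅ π : G.Strat G.isDiamond, G.reachP σ π T v :=
  le_ciInf fun π' => G.reachP_nonneg σ π' v

lemma iInf_reachP_le_one (v : V) : (⨅ π : G.Strat G.isDiamond, G.reachP σ π T v) ≤ 1 :=
  ciInf_le_of_le (G.bddBelow_reachP σ v) (Classical.arbitrary _)
    (G.reachP_le_one σ _ v)

lemma bddAbove_iInf_reachP (v : V) :
    BddAbove (Set.range fun σ : G.Strat G.isBox =>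
      ⨅ π : G.Strat G.isDiamond, G.reachP σ π T v) :=
  ⟨1, by rintro x ⟨σ', rfl⟩; exact G.iInf_reachP_le_one σ' v⟩

lemma iInf_le_val (v : V) :
    (⨅ π : G.Strat G.isDiamond, G.reachP σ π T v) ≤ G.val T v :=
  le_ciSup (G.bddAbove_iInf_reachP (T := T) v) σ

lemma val_nonneg (v : V) : 0 ≤ G.val T v :=
  le_trans (G.iInf_reachP_nonneg (Classical.arbitrary _) v)
    (G.iInf_le_val (Classical.arbitrary _) v)

lemma val_le_one (v : V) : G.val T v ≤ 1 :=
  ciSup_le fun σ' => G.iInf_reachP_le_one σ' v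

lemma val_mem (v : V) (hv : v ∈ T) : G.val T v = 1 := by
  have : ∀ (σ' : G.Strat G.isBox) (π' : G.Strat G.isDiamond), G.reachP σ' π' T v = 1 :=
    fun σ' π' => G.reachP_mem σ' π' v hv
  simp only [val, this, ciInf_const, ciSup_const]

lemma bddAbove_val_im (S : Set V) : BddAbove (G.val T '' S) :=
  ⟨1, by rintro x ⟨u, _, rfl⟩; exact G.val_le_one u⟩

lemma bddBelow_val_im (S : Set V) : BddBelow (G.val T '' S) :=
  ⟨0, by rintro x ⟨u, _, rfl⟩; exact G.val_nonneg u⟩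

lemma im_nonempty (g : V → ℝ) (v : V) : (g '' {u | G.edge v u}).Nonempty :=
  ⟨g (G.dflt v), G.dflt v, G.edge_dflt v, rfl⟩


lemma reachP_shift_consS_dia (σ' : G.Strat G.isBox) (s : V → G.Strat G.isDiamond)
    (x u : V) :
    G.reachP σ' ((consS (comb s)).shift [x]) T u = G.reachP σ' (s u) T u :=
  (G.reachP_ext _ _ rfl (G.shift_consS (comb s) x) u).trans (G.reachP_comb_dia σ' s u)

lemma reachP_shift_consS_box (s : V → G.Strat G.isBox) (π' : G.Strat G.isDiamond)
    (x u : V) :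
    G.reachP ((consS (comb s)).shift [x]) π' T u = G.reachP (s u) π' T u :=
  (G.reachP_ext _ _ (G.shift_consS (comb s) x) rfl u).trans (G.reachP_comb_box s π' u)

-- Bellman equation, box case

lemma le_val_of_edge {v u0 : V} (hv : v ∉ T) (hb : G.isBox v) (hu : G.edge v u0) :
    G.val T u0 ≤ G.val T v := by
  refine ciSup_le fun σ' => ?_
  have key : ∀ π : G.Strat G.isDiamond,
      G.reachP (afterS v u0 hu σ') π T v = G.reachP σ' (π.shift [v]) T u0 := by
    intro π
    rw [G.reachP_step (afterS v u0 hu σ') π hv]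
    have hstep : ∀ u, G.step (afterS v u0 hu σ') π [] v u = if u = u0 then 1 else 0 := by
      intro u
      rw [step, if_pos hb]
      show (if v = v then (if u = u0 then (1:ℝ) else 0) else _) = _
      rw [if_pos rfl]
    have h1 : ∀ u, u ≠ u0 → G.step (afterS v u0 hu σ') π [] v u *
        G.reachP ((afterS v u0 hu σ').shift [v]) (π.shift [v]) T u = 0 := by
      intro u hu'
      rw [hstep, if_neg hu', zero_mul]
    rw [tsum_eq_single u0 h1, hstep, if_pos rfl, one_mul]
    exact G.reachP_ext _ _ (G.shift_afterS v u0 v hu σ') rfl u0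
  refine le_trans (le_ciInf fun π => ?_) (G.iInf_le_val (afterS v u0 hu σ') v)
  calc (⨅ π' : G.Strat G.isDiamond, G.reachP σ' π' T u0)
      ≤ G.reachP σ' (π.shift [v]) T u0 := ciInf_le (G.bddBelow_reachP σ' u0) _
    _ = G.reachP (afterS v u0 hu σ') π T v := (key π).symm

lemma val_le_sSup {v : V} (hv : v ∉ T) (_hb : G.isBox v) :
    G.val T v ≤ sSup (G.val T '' {u | G.edge v u}) := by
  refine ciSup_le fun σ => le_of_forall_pos' fun ε hε => ?_
  have hchoice : ∀ u : V, ∃ π' : G.Strat G.isDiamond,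
      G.reachP (σ.shift [v]) π' T u <
        (⨅ π' : G.Strat G.isDiamond, G.reachP (σ.shift [v]) π' T u) + ε :=
    fun u => exists_lt_of_ciInf_lt (lt_add_of_pos_right _ hε)
  choose s hs using hchoice
  have hb1 : G.reachP σ (consS (comb s)) T v ≤ sSup (G.val T '' {u | G.edge v u}) + ε := by
    rw [G.reachP_step σ (consS (comb s)) hv]
    calc ∑' u, G.step σ (consS (comb s)) [] v u *
            G.reachP (σ.shift [v]) ((consS (comb s)).shift [v]) T u
        ≤ ∑' u, G.step σ (consS (comb s)) [] v u *
            (sSup (G.val T '' {u | G.edge v u}) + ε) := ?_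
      _ = sSup (G.val T '' {u | G.edge v u}) + ε := by
          rw [tsum_mul_right, G.tsum_step σ (consS (comb s)) [] v, one_mul]
    refine tsum_mul_le_tsum_mul (G.step_nonneg σ (consS (comb s)) [] v)
      (Summable.mul_bdd (G.summable_step σ (consS (comb s)) [] v)
        (G.step_nonneg σ (consS (comb s)) [] v)
        (fun u => G.reachP_nonneg _ _ u) (fun u => G.reachP_le_one _ _ u))
      ((G.summable_step σ (consS (comb s)) [] v).mul_right _) (fun u hne => ?_)
    have hedge : G.edge v u := G.step_edge σ (consS (comb s)) hne
    rw [G.reachP_shift_consS_dia (σ.shift [v]) s v u]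
    refine (hs u).le.trans (add_le_add_left ?_ ε)
    exact (G.iInf_le_val (σ.shift [v]) u).trans
      (le_csSup (G.bddAbove_val_im _) ⟨u, hedge, rfl⟩)
  exact le_trans (ciInf_le (G.bddBelow_reachP σ v) (consS (comb s))) hb1

-- Bellman equation, diamond case

lemma val_le_of_edge {v u0 : V} (hv : v ∉ T) (hd : G.isDiamond v) (hu : G.edge v u0) :
    G.val T v ≤ G.val T u0 := by
  have hnb : ¬ G.isBox v := fun h => G.disjBD v ⟨h, hd⟩
  refine ciSup_le fun σ => ?_
  refine le_trans ?_ (G.iInf_le_val (σ.shift [v]) u0)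
  refine le_ciInf fun π' => ?_
  have key : G.reachP σ (afterS v u0 hu π') T v = G.reachP (σ.shift [v]) π' T u0 := by
    rw [G.reachP_step σ (afterS v u0 hu π') hv]
    have hstep : ∀ u, G.step σ (afterS v u0 hu π') [] v u = if u = u0 then 1 else 0 := by
      intro u
      rw [step, if_neg hnb, if_pos hd]
      show (if v = v then (if u = u0 then (1:ℝ) else 0) else _) = _
      rw [if_pos rfl]
    have h1 : ∀ u, u ≠ u0 → G.step σ (afterS v u0 hu π') [] v u *
        G.reachP (σ.shift [v]) ((afterS v u0 hu π').shift [v]) T u = 0 := by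
      intro u hu'
      rw [hstep, if_neg hu', zero_mul]
    rw [tsum_eq_single u0 h1, hstep, if_pos rfl, one_mul]
    exact G.reachP_ext _ _ rfl (G.shift_afterS v u0 v hu π') u0
  calc (⨅ π : G.Strat G.isDiamond, G.reachP σ π T v)
      ≤ G.reachP σ (afterS v u0 hu π') T v := ciInf_le (G.bddBelow_reachP σ v) _
    _ = G.reachP (σ.shift [v]) π' T u0 := key

lemma sInf_le_val {v : V} (hv : v ∉ T) (hd : G.isDiamond v) :
    sInf (G.val T '' {u | G.edge v u}) ≤ G.val T v := by
  have hnb : ¬ G.isBox v := fun h => G.disjBD v ⟨h, hd⟩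
  refine le_of_forall_pos' fun ε hε => ?_
  have hchoice : ∀ u : V, ∃ σ' : G.Strat G.isBox,
      G.val T u - ε < ⨅ π' : G.Strat G.isDiamond, G.reachP σ' π' T u :=
    fun u => exists_lt_of_lt_ciSup (by
      rw [show (⨆ σ' : G.Strat G.isBox, ⨅ π' : G.Strat G.isDiamond, G.reachP σ' π' T u)
        = G.val T u from rfl]
      exact sub_lt_self _ hε)
  choose s hs using hchoice
  have hkey : sInf (G.val T '' {u | G.edge v u}) - ε
      ≤ ⨅ π : G.Strat G.isDiamond, G.reachP (consS (comb s)) π T v := by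
    refine le_ciInf fun π => ?_
    rw [G.reachP_step (consS (comb s)) π hv]
    calc sInf (G.val T '' {u | G.edge v u}) - ε
        = ∑' u, G.step (consS (comb s)) π [] v u *
            (sInf (G.val T '' {u | G.edge v u}) - ε) := by
          rw [tsum_mul_right, G.tsum_step, one_mul]
      _ ≤ ∑' u, G.step (consS (comb s)) π [] v u *
            G.reachP ((consS (comb s)).shift [v]) (π.shift [v]) T u := by
          refine tsum_mul_le_tsum_mul (G.step_nonneg _ _ [] v)
            ((G.summable_step _ _ [] v).mul_right _)
            (Summable.mul_bdd (G.summable_step _ _ [] v) (G.step_nonneg _ _ [] v)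
              (fun u => G.reachP_nonneg _ _ u) (fun u => G.reachP_le_one _ _ u))
            (fun u hne => ?_)
          have hedge : G.edge v u := G.step_edge _ _ hne
          rw [G.reachP_shift_consS_box s (π.shift [v]) v u]
          refine le_trans (sub_le_sub_right (csInf_le (G.bddBelow_val_im _) ⟨u, hedge, rfl⟩) ε) ?_
          refine le_trans (le_of_lt (hs u)) ?_
          exact ciInf_le (G.bddBelow_reachP (s u) u) (π.shift [v])
  have := hkey.trans (G.iInf_le_val (consS (comb s)) v)
  linarith


-- Bellman equation, circle case

lemma summable_prob {v : V} (hc : G.isCirc v) : Summable (G.prob v) :=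
  summable_of_tsum_one (G.prob_sum v hc)

lemma step_circ {σ : G.Strat G.isBox} {π : G.Strat G.isDiamond} {v : V}
    (hc : G.isCirc v) (w : List V) (u : V) : G.step σ π w v u = G.prob v u := by
  have hnb : ¬ G.isBox v := fun h => G.disjBC v ⟨h, hc⟩
  have hnd : ¬ G.isDiamond v := fun h => G.disjDC v ⟨h, hc⟩
  rw [step, if_neg hnb, if_neg hnd]

lemma val_le_circ {v : V} (hv : v ∉ T) (hc : G.isCirc v) :
    G.val T v ≤ ∑' u, G.prob v u * G.val T u := by
  refine ciSup_le fun σ => le_of_forall_pos' fun ε hε => ?_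
  have hchoice : ∀ u : V, ∃ π' : G.Strat G.isDiamond,
      G.reachP (σ.shift [v]) π' T u <
        (⨅ π' : G.Strat G.isDiamond, G.reachP (σ.shift [v]) π' T u) + ε :=
    fun u => exists_lt_of_ciInf_lt (lt_add_of_pos_right _ hε)
  choose s hs using hchoice
  have hb1 : G.reachP σ (consS (comb s)) T v ≤ (∑' u, G.prob v u * G.val T u) + ε := by
    rw [G.reachP_step σ (consS (comb s)) hv]
    calc ∑' u, G.step σ (consS (comb s)) [] v u *
            G.reachP (σ.shift [v]) ((consS (comb s)).shift [v]) T u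
        ≤ ∑' u, G.step σ (consS (comb s)) [] v u * (G.val T u + ε) := by
          refine tsum_mul_le_tsum_mul (G.step_nonneg σ (consS (comb s)) [] v)
            (Summable.mul_bdd (G.summable_step _ _ [] v) (G.step_nonneg _ _ [] v)
              (fun u => G.reachP_nonneg _ _ u) (fun u => G.reachP_le_one _ _ u))
            (Summable.mul_bdd (G.summable_step _ _ [] v) (G.step_nonneg _ _ [] v)
              (fun u => add_nonneg (G.val_nonneg u) hε.le)
              (fun u => add_le_add_left (G.val_le_one u) ε))
            (fun u _ => ?_)
          rw [G.reachP_shift_consS_dia (σ.shift [v]) s v u]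
          exact (hs u).le.trans (add_le_add_left (G.iInf_le_val (σ.shift [v]) u) ε)
      _ = (∑' u, G.prob v u * G.val T u) + ε := by
          have h1 : ∀ u, G.step σ (consS (comb s)) [] v u * (G.val T u + ε)
              = G.prob v u * G.val T u + G.prob v u * ε := by
            intro u; rw [G.step_circ hc, mul_add]
          rw [tsum_congr h1, Summable.tsum_add
            (Summable.mul_bdd (G.summable_prob hc) (G.prob_nonneg v)
              (fun u => G.val_nonneg u) (fun u => G.val_le_one u))
            ((G.summable_prob hc).mul_right ε), tsum_mul_right, G.prob_sum v hc, one_mul]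
  exact le_trans (ciInf_le (G.bddBelow_reachP σ v) (consS (comb s))) hb1

lemma circ_le_val {v : V} (hv : v ∉ T) (hc : G.isCirc v) :
    (∑' u, G.prob v u * G.val T u) ≤ G.val T v := by
  refine le_of_forall_pos' fun ε hε => ?_
  have hchoice : ∀ u : V, ∃ σ' : G.Strat G.isBox,
      G.val T u - ε < ⨅ π' : G.Strat G.isDiamond, G.reachP σ' π' T u :=
    fun u => exists_lt_of_lt_ciSup (by
      rw [show (⨆ σ' : G.Strat G.isBox, ⨅ π' : G.Strat G.isDiamond, G.reachP σ' π' T u)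
        = G.val T u from rfl]
      exact sub_lt_self _ hε)
  choose s hs using hchoice
  have hkey : (∑' u, G.prob v u * G.val T u) - ε
      ≤ ⨅ π : G.Strat G.isDiamond, G.reachP (consS (comb s)) π T v := by
    refine le_ciInf fun π => ?_
    rw [G.reachP_step (consS (comb s)) π hv]
    calc (∑' u, G.prob v u * G.val T u) - ε
        = ∑' u, G.step (consS (comb s)) π [] v u * (G.val T u - ε) := by
          have h1 : ∀ u, G.step (consS (comb s)) π [] v u * (G.val T u - ε)
              = G.prob v u * G.val T u - G.prob v u * ε := by
            intro u; rw [G.step_circ hc, mul_sub]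
          rw [tsum_congr h1, Summable.tsum_sub
            (Summable.mul_bdd (G.summable_prob hc) (G.prob_nonneg v)
              (fun u => G.val_nonneg u) (fun u => G.val_le_one u))
            ((G.summable_prob hc).mul_right ε), tsum_mul_right, G.prob_sum v hc, one_mul]
      _ ≤ ∑' u, G.step (consS (comb s)) π [] v u *
            G.reachP ((consS (comb s)).shift [v]) (π.shift [v]) T u := by
          have hsum1 : Summable fun u => G.step (consS (comb s)) π [] v u * (G.val T u - ε) := by
            refine Summable.congr (Summable.sub
              (Summable.mul_bdd (G.summable_step (consS (comb s)) π [] v)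
                (G.step_nonneg _ _ [] v) (fun u => G.val_nonneg u) (fun u => G.val_le_one u))
              ((G.summable_step (consS (comb s)) π [] v).mul_right ε)) (fun u => (mul_sub _ _ _).symm)
          refine tsum_mul_le_tsum_mul (G.step_nonneg _ _ [] v) hsum1
            (Summable.mul_bdd (G.summable_step _ _ [] v) (G.step_nonneg _ _ [] v)
              (fun u => G.reachP_nonneg _ _ u) (fun u => G.reachP_le_one _ _ u))
            (fun u _ => ?_)
          rw [G.reachP_shift_consS_box s (π.shift [v]) v u]
          refine le_trans (le_of_lt (hs u)) ?_
          exact ciInf_le (G.bddBelow_reachP (s u) u) (π.shift [v])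
  have := hkey.trans (G.iInf_le_val (consS (comb s)) v)
  linarith


lemma bellman_val : G.bellman T (G.val T) = G.val T := by
  funext v
  by_cases hT : v ∈ T
  · rw [G.val_mem v hT]
    simp [bellman, hT]
  rcases G.cover v with hb | hd | hc
  · have : G.bellman T (G.val T) v = sSup (G.val T '' {u | G.edge v u}) := by
      simp [bellman, hT, hb]
    rw [this]
    refine le_antisymm (csSup_le ?_ ?_) (G.val_le_sSup hT hb)
    · exact (G.im_nonempty (G.val T) v)
    · rintro x ⟨u, hu, rfl⟩
      exact G.le_val_of_edge hT hb hu
  · have hnb : ¬ G.isBox v := fun h => G.disjBD v ⟨h, hd⟩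
    have : G.bellman T (G.val T) v = sInf (G.val T '' {u | G.edge v u}) := by
      simp [bellman, hT, hnb, hd]
    rw [this]
    refine le_antisymm (G.sInf_le_val hT hd) (le_csInf (G.im_nonempty (G.val T) v) ?_)
    rintro x ⟨u, hu, rfl⟩
    exact G.val_le_of_edge hT hd hu
  · have hnb : ¬ G.isBox v := fun h => G.disjBC v ⟨h, hc⟩
    have hnd : ¬ G.isDiamond v := fun h => G.disjDC v ⟨h, hc⟩
    have : G.bellman T (G.val T) v = ∑' u, G.prob v u * G.val T u := by
      simp [bellman, hT, hnb, hnd]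
    rw [this]
    exact le_antisymm (G.circ_le_val hT hc) (G.val_le_circ hT hc)

/-- the deterministic strategy following a choice function -/
noncomputable def pureStrat {V : Type*} {G : SGame V} (own : V → Prop)
    (c : List V → V → V) (hc : ∀ w v, G.edge v (c w v)) : G.Strat own where
  f := fun w v u => if u = c w v then 1 else 0
  nonneg := fun w v u => by by_cases h : u = c w v <;> simp [h]
  supp := fun w v u _ h => by
    by_cases hu : u = c w v
    · subst hu; exact hc w v
    · simp [hu] at h
  sum_one := fun w v _ => tsum_ite_eq (c w v) 1


lemma val_le_fixed (f : V → ℝ) (hf01 : ∀ v, f v ∈ Set.Icc (0:ℝ) 1)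
    (hfix : G.bellman T f = f) (v : V) : G.val T v ≤ f v := by
  refine le_of_forall_pos' fun ε hε => ?_
  have hfT : ∀ v, v ∈ T → f v = 1 := fun v hv => by
    have := congrFun hfix v
    rw [bellman, if_pos hv] at this
    exact this.symm
  have hfB : ∀ v, v ∉ T → G.isBox v → sSup (f '' {u | G.edge v u}) = f v := by
    intro v hv hb
    have := congrFun hfix v
    rwa [bellman, if_neg hv, if_pos hb] at this
  have hfD : ∀ v, v ∉ T → G.isDiamond v → sInf (f '' {u | G.edge v u}) = f v := by
    intro v hv hd
    have hnb : ¬ G.isBox v := fun h => G.disjBD v ⟨h, hd⟩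
    have := congrFun hfix v
    rwa [bellman, if_neg hv, if_neg hnb, if_pos hd] at this
  have hfC : ∀ v, v ∉ T → G.isCirc v → (∑' u, G.prob v u * f u) = f v := by
    intro v hv hc
    have hnb : ¬ G.isBox v := fun h => G.disjBC v ⟨h, hc⟩
    have hnd : ¬ G.isDiamond v := fun h => G.disjDC v ⟨h, hc⟩
    have := congrFun hfix v
    rwa [bellman, if_neg hv, if_neg hnb, if_neg hnd] at this
  have hpick : ∀ (v : V) (k : ℕ), ∃ u, G.edge v u ∧
      f u < sInf (f '' {u | G.edge v u}) + ε/2^(k+1) := by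
    intro v k
    have hpos : (0:ℝ) < ε/2^(k+1) := by positivity
    obtain ⟨x, ⟨u, hu, rfl⟩, hlt⟩ :=
      exists_lt_of_csInf_lt (G.im_nonempty f v) (lt_add_of_pos_right _ hpos)
    exact ⟨u, hu, hlt⟩
  choose pick hpick1 hpick2 using hpick
  set πmin : G.Strat G.isDiamond :=
    pureStrat G.isDiamond (fun w v => pick v w.length) (fun w v => hpick1 v w.length) with hπ
  have hπf : ∀ w v u, πmin.f w v u = if u = pick v w.length then 1 else 0 := fun _ _ _ => rfl
  have key : ∀ (σ : G.Strat G.isBox) (n : ℕ) (w : List V) (v : V),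
      G.reachN σ πmin T n w v ≤ f v + ε/2^(w.length) := by
    intro σ n
    induction n with
    | zero =>
      intro w v
      have hpos : (0:ℝ) < ε/2^(w.length) := by positivity
      rw [reachN_zero]
      split_ifs with h
      · rw [← hfT v h]; linarith
      · linarith [(hf01 v).1]
    | succ n ih =>
      intro w v
      have hpos : (0:ℝ) < ε/2^(w.length) := by positivity
      have hpos1 : (0:ℝ) < ε/2^(w.length+1) := by positivity
      rw [reachN_succ]
      split_ifs with h
      · rw [← hfT v h]; linarith
      · have hmain : (∑' u, G.step σ πmin w v u * f u) ≤ f v + ε/2^(w.length+1) := by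
          rcases G.cover v with hb | hd | hc
          · have hcalc : (∑' u, G.step σ πmin w v u * f u) ≤ ∑' u, G.step σ πmin w v u * f v := by
              refine tsum_mul_le_tsum_mul (G.step_nonneg σ πmin w v)
                (Summable.mul_bdd (G.summable_step σ πmin w v) (G.step_nonneg σ πmin w v)
                  (fun u => (hf01 u).1) (fun u => (hf01 u).2))
                ((G.summable_step σ πmin w v).mul_right (f v)) (fun u hne => ?_)
              have hba : BddAbove (f '' {u | G.edge v u}) :=
                ⟨1, by rintro x ⟨u', _, rfl⟩; exact (hf01 u').2⟩
              exact le_trans (le_csSup hba ⟨u, G.step_edge σ πmin hne, rfl⟩) (hfB v h hb).le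
            have heq : (∑' u, G.step σ πmin w v u * f v) = f v := by
              rw [tsum_mul_right, G.tsum_step σ πmin w v, one_mul]
            rw [heq] at hcalc
            linarith
          · have hnb : ¬ G.isBox v := fun h' => G.disjBD v ⟨h', hd⟩
            have hstep : ∀ u, G.step σ πmin w v u = if u = pick v w.length then 1 else 0 := by
              intro u; rw [step, if_neg hnb, if_pos hd, hπf]
            have htsum : (∑' u, G.step σ πmin w v u * f u) = f (pick v w.length) := by
              rw [tsum_eq_single (pick v w.length) (fun u hu => by
                rw [hstep, if_neg hu, zero_mul]), hstep, if_pos rfl, one_mul]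
            rw [htsum]
            have := hpick2 v w.length
            rw [hfD v h hd] at this
            linarith
          · have htsum : (∑' u, G.step σ πmin w v u * f u) = ∑' u, G.prob v u * f u :=
              tsum_congr fun u => by rw [G.step_circ hc]
            rw [htsum, hfC v h hc]
            linarith
        have hlen : (w ++ [v]).length = w.length + 1 := by simp
        calc ∑' u, G.step σ πmin w v u * G.reachN σ πmin T n (w ++ [v]) u
            ≤ ∑' u, G.step σ πmin w v u * (f u + ε/2^(w.length+1)) := by
              refine tsum_mul_le_tsum_mul (G.step_nonneg σ πmin w v)
                (G.summable_step_mul_reachN σ πmin n w (w ++ [v]) v)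
                (Summable.mul_bdd (G.summable_step σ πmin w v) (G.step_nonneg σ πmin w v)
                  (fun u => add_nonneg (hf01 u).1 hpos1.le)
                  (fun u => add_le_add_left (hf01 u).2 _))
                (fun u _ => ?_)
              have := ih (w ++ [v]) u
              rwa [hlen] at this
          _ = (∑' u, G.step σ πmin w v u * f u) + ε/2^(w.length+1) := by
              have h1 : ∀ u, G.step σ πmin w v u * (f u + ε/2^(w.length+1))
                  = G.step σ πmin w v u * f u + G.step σ πmin w v u * (ε/2^(w.length+1)) :=
                fun u => mul_add _ _ _
              rw [tsum_congr h1, Summable.tsum_add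
                (Summable.mul_bdd (G.summable_step σ πmin w v) (G.step_nonneg σ πmin w v)
                  (fun u => (hf01 u).1) (fun u => (hf01 u).2))
                ((G.summable_step σ πmin w v).mul_right _), tsum_mul_right,
                G.tsum_step σ πmin w v, one_mul]
          _ ≤ (f v + ε/2^(w.length+1)) + ε/2^(w.length+1) := add_le_add_left hmain _
          _ = f v + ε/2^(w.length) := by
              rw [pow_succ]
              ring
  refine ciSup_le fun σ => le_trans (ciInf_le (G.bddBelow_reachP σ v) πmin) ?_
  refine ciSup_le fun n => ?_
  have := key σ n [] v
  simpa using this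

end SGame

/-- The tuple of values of a stochastic reachability game is the least fixed
point of the Bellman operator on the complete lattice of functions
`V → [0,1]` ordered pointwise. -/
theorem val_is_least_fixed_point_of_bellman {V : Type*} (G : SGame V) (T : Set V) :
    ((∀ v, G.val T v ∈ Set.Icc (0:ℝ) 1) ∧ G.bellman T (G.val T) = G.val T) ∧
      ∀ f : V → ℝ, (∀ v, f v ∈ Set.Icc (0:ℝ) 1) → G.bellman T f = f →
        ∀ v, G.val T v ≤ f v := by
  refine ⟨⟨fun v => ⟨G.val_nonneg v, G.val_le_one v⟩, G.bellman_val⟩, ?_⟩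
  intro f hf01 hfix v
  exact G.val_le_fixed f hf01 hfix v
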